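/- For a finite unitary magma M with m elements, the dimension of the space of quadratic relations of the noncrossing clique operad NCM, presented by the generators T_M (all M-triangles) with relations generated by the three displayed families, equals 2m⁶ - 2m⁵ + m⁴. -/

import Mathlib

/-- The arity-3 component of the free operad on the binary generators `T_M`
(the `M`-triangles, encoded as triples `(p₀, p₁, p₂) ∈ M³`): a basis is given by
the syntax trees `p ∘₁ q` and `p ∘₂ q`, encoded as triples
`(side, p, q) : Bool × M³ × M³` where `false` stands for `∘₁` and `true` for
`∘₂`.  Its dimension is `2 m⁶`. -/
abbrev FreeOp3 (M : Type) : Type := (Bool × (M × M × M) × (M × M × M)) → ℚ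

namespace NCMAux

variable {M : Type} [MulOneClass M] [Fintype M] [DecidableEq M]

/-- The index set for the standard basis of `FreeOp3 M`. -/
abbrev Idx (M : Type) := Bool × (M × M × M) × (M × M × M)

/-- The set of connected components of the "rewriting graph" on `Idx M`. -/
abbrev Cls (M : Type) [One M] := (M × M × M × M) ⊕ (Bool × (M × M × M × M) × {v : M // v ≠ 1})

instance instDecEqCls (M : Type) [One M] [DecidableEq M] : DecidableEq (Cls M) :=
  @instDecidableEqSum _ _ inferInstance inferInstance

/-- The component of a basis vector. -/
def cmp : Idx M → Cls M := fun i =>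
  match i with
  | (false, (p₀, p₁, p₂), (q₀, q₁, q₂)) =>
      if h : p₁ * q₀ = 1 then .inl (p₀, p₂, q₁, q₂)
      else .inr (false, (p₀, p₂, q₁, q₂), ⟨p₁ * q₀, h⟩)
  | (true, (p₀, p₁, p₂), (q₀, q₁, q₂)) =>
      if h : p₂ * q₀ = 1 then .inl (p₀, q₂, p₁, q₁)
      else .inr (true, (p₀, p₁, q₁, q₂), ⟨p₂ * q₀, h⟩)

/-- A representative of each component. -/
def rep : Cls M → Idx M := fun j =>
  match j with
  | .inl (x, y, z, w) => (false, (x, 1, y), (1, z, w))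
  | .inr (false, (x, y, z, w), v) => (false, (x, v.1, y), (1, z, w))
  | .inr (true, (x, y, z, w), v) => (true, (x, y, v.1), (1, z, w))

lemma cmp_rep (j : Cls M) : cmp (rep j) = j := by
  rcases j with ⟨x, y, z, w⟩ | ⟨b, ⟨x, y, z, w⟩, v⟩
  · simp [cmp, rep]
  · cases b <;> simp [cmp, rep, v.2]

/-- Summation over the fibers of `cmp`. -/
def L : FreeOp3 M →ₗ[ℚ] (Cls M → ℚ) where
  toFun f := fun j => ∑ i : Idx M, if cmp i = j then f i else 0
  map_add' f g := by
    funext j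
    simp only [Pi.add_apply]
    rw [← Finset.sum_add_distrib]
    exact Finset.sum_congr rfl fun i _ => by split <;> simp
  map_smul' c f := by
    funext j
    simp only [Pi.smul_apply, RingHom.id_apply, smul_eq_mul, Finset.mul_sum]
    exact Finset.sum_congr rfl fun i _ => by split <;> simp

lemma L_single (i : Idx M) : L (Pi.single i 1 : FreeOp3 M) = Pi.single (cmp i) 1 := by
  funext j
  show (∑ i' : Idx M, if cmp i' = j then (Pi.single i 1 : FreeOp3 M) i' else 0) = _
  rw [Finset.sum_eq_single i]
  · by_cases h : cmp i = j <;> simp [h, Pi.single_apply, eq_comm]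
  · intro b _ hb
    simp [Pi.single_apply, hb]
  · simp

lemma sum_single {ι : Type} [Fintype ι] [DecidableEq ι] (f : ι → ℚ) :
    ∑ i : ι, f i • (Pi.single i 1 : ι → ℚ) = f := by
  funext x
  simp [Finset.sum_apply, Pi.single_apply, mul_ite, eq_comm (a := x)]

/-- The set of generating relations. -/
def Rel (M : Type) [MulOneClass M] [DecidableEq M] : Set (FreeOp3 M) :=
  ({f : FreeOp3 M | ∃ p₀ p₁ p₂ q₀ q₁ q₂ r₀ r₁ : M,
      p₁ * q₀ = r₁ * r₀ ∧ p₁ * q₀ ≠ 1 ∧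
      f = Pi.single (false, (p₀, p₁, p₂), (q₀, q₁, q₂)) 1
          - Pi.single (false, (p₀, r₁, p₂), (r₀, q₁, q₂)) 1} ∪
    {f : FreeOp3 M | ∃ p₀ p₁ p₂ q₀ q₁ q₂ r₀ r₂ : M,
      p₁ * q₀ = 1 ∧ r₂ * r₀ = 1 ∧
      f = Pi.single (false, (p₀, p₁, p₂), (q₀, q₁, q₂)) 1
          - Pi.single (true, (p₀, q₁, r₂), (r₀, q₂, p₂)) 1}) ∪
    {f : FreeOp3 M | ∃ p₀ p₁ p₂ q₀ q₁ q₂ r₀ r₂ : M,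
      p₂ * q₀ = r₂ * r₀ ∧ p₂ * q₀ ≠ 1 ∧
      f = Pi.single (true, (p₀, p₁, p₂), (q₀, q₁, q₂)) 1
          - Pi.single (true, (p₀, p₁, r₂), (r₀, q₁, q₂)) 1}

lemma key (i : Idx M) :
    (Pi.single i 1 - Pi.single (rep (cmp i)) 1 : FreeOp3 M) ∈ Submodule.span ℚ (Rel M) := by
  obtain ⟨b, ⟨p₀, p₁, p₂⟩, q₀, q₁, q₂⟩ := i
  cases b
  · by_cases h : p₁ * q₀ = 1
    · have e : cmp ((false, (p₀, p₁, p₂), (q₀, q₁, q₂)) : Idx M)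
          = Sum.inl (p₀, p₂, q₁, q₂) := by simp [cmp, h]
      rw [e]
      have g1 : (Pi.single (false, (p₀, p₁, p₂), (q₀, q₁, q₂)) 1
          - Pi.single (true, (p₀, q₁, 1), (1, q₂, p₂)) 1 : FreeOp3 M) ∈ Rel M :=
        Or.inl (Or.inr ⟨p₀, p₁, p₂, q₀, q₁, q₂, 1, 1, h, mul_one 1, rfl⟩)
      have g2 : (Pi.single (false, (p₀, 1, p₂), (1, q₁, q₂)) 1
          - Pi.single (true, (p₀, q₁, 1), (1, q₂, p₂)) 1 : FreeOp3 M) ∈ Rel M :=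
        Or.inl (Or.inr ⟨p₀, 1, p₂, 1, q₁, q₂, 1, 1, mul_one 1, mul_one 1, rfl⟩)
      have e2 : (Pi.single (false, (p₀, p₁, p₂), (q₀, q₁, q₂)) 1
          - Pi.single (rep (Sum.inl (p₀, p₂, q₁, q₂))) 1 : FreeOp3 M)
          = (Pi.single (false, (p₀, p₁, p₂), (q₀, q₁, q₂)) 1
              - Pi.single (true, (p₀, q₁, 1), (1, q₂, p₂)) 1 : FreeOp3 M)
            - (Pi.single (false, (p₀, 1, p₂), (1, q₁, q₂)) 1
              - Pi.single (true, (p₀, q₁, 1), (1, q₂, p₂)) 1 : FreeOp3 M) := by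
        simp [rep]
      rw [e2]
      exact sub_mem (Submodule.subset_span g1) (Submodule.subset_span g2)
    · have e : cmp ((false, (p₀, p₁, p₂), (q₀, q₁, q₂)) : Idx M)
          = Sum.inr (false, (p₀, p₂, q₁, q₂), ⟨p₁ * q₀, h⟩) := by simp [cmp, h]
      rw [e]
      exact Submodule.subset_span (Or.inl (Or.inl
        ⟨p₀, p₁, p₂, q₀, q₁, q₂, 1, p₁ * q₀, (mul_one _).symm, h, rfl⟩))
  · by_cases h : p₂ * q₀ = 1
    · have e : cmp ((true, (p₀, p₁, p₂), (q₀, q₁, q₂)) : Idx M)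
          = Sum.inl (p₀, q₂, p₁, q₁) := by simp [cmp, h]
      rw [e]
      have g : (Pi.single (false, (p₀, 1, q₂), (1, p₁, q₁)) 1
          - Pi.single (true, (p₀, p₁, p₂), (q₀, q₁, q₂)) 1 : FreeOp3 M) ∈ Rel M :=
        Or.inl (Or.inr ⟨p₀, 1, q₂, 1, p₁, q₁, q₀, p₂, mul_one 1, h, rfl⟩)
      have e2 : (Pi.single (true, (p₀, p₁, p₂), (q₀, q₁, q₂)) 1
          - Pi.single (rep (Sum.inl (p₀, q₂, p₁, q₁))) 1 : FreeOp3 M)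
          = -(Pi.single (false, (p₀, 1, q₂), (1, p₁, q₁)) 1
              - Pi.single (true, (p₀, p₁, p₂), (q₀, q₁, q₂)) 1 : FreeOp3 M) := by
        simp [rep]
      rw [e2]
      exact neg_mem (Submodule.subset_span g)
    · have e : cmp ((true, (p₀, p₁, p₂), (q₀, q₁, q₂)) : Idx M)
          = Sum.inr (true, (p₀, p₁, q₁, q₂), ⟨p₂ * q₀, h⟩) := by simp [cmp, h]
      rw [e]
      exact Submodule.subset_span (Or.inr
        ⟨p₀, p₁, p₂, q₀, q₁, q₂, 1, p₂ * q₀, (mul_one _).symm, h, rfl⟩)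

lemma span_rel : Submodule.span ℚ (Rel M) = LinearMap.ker (L (M := M)) := by
  apply le_antisymm
  · rw [Submodule.span_le]
    rintro f ((⟨p₀, p₁, p₂, q₀, q₁, q₂, r₀, r₁, h1, h2, rfl⟩ |
        ⟨p₀, p₁, p₂, q₀, q₁, q₂, r₀, r₂, h1, h2, rfl⟩) |
        ⟨p₀, p₁, p₂, q₀, q₁, q₂, r₀, r₂, h1, h2, rfl⟩) <;>
      · rw [SetLike.mem_coe, LinearMap.mem_ker, map_sub, L_single, L_single, sub_eq_zero]
        congr 1
        first
        | simp [cmp, h2, ← h1]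
        | simp [cmp, h1, h2]
  · intro f hf
    rw [LinearMap.mem_ker] at hf
    have h1 : ∑ i : Idx M, f i • (Pi.single i 1 : FreeOp3 M) = f := sum_single f
    have h2 : ∑ i : Idx M, f i • (Pi.single (rep (cmp i)) 1 : FreeOp3 M) = 0 := by
      rw [← Finset.sum_fiberwise Finset.univ cmp
        (fun i => f i • (Pi.single (rep (cmp i)) 1 : FreeOp3 M))]
      refine Finset.sum_eq_zero fun j _ => ?_
      have : ∀ i ∈ Finset.univ.filter fun i => cmp i = j,
          f i • (Pi.single (rep (cmp i)) 1 : FreeOp3 M) = f i • (Pi.single (rep j) 1 : FreeOp3 M) := by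
        intro i hi
        rw [(Finset.mem_filter.mp hi).2]
      rw [Finset.sum_congr rfl this, ← Finset.sum_smul]
      have : ∑ i ∈ Finset.univ.filter fun i => cmp i = j, f i = L f j := by
        show _ = ∑ i : Idx M, if cmp i = j then f i else 0
        rw [Finset.sum_filter]
      rw [this, hf]
      simp
    have : f = ∑ i : Idx M, f i • (Pi.single i 1 - Pi.single (rep (cmp i)) 1 : FreeOp3 M) := by
      simp only [smul_sub, Finset.sum_sub_distrib, h1, h2, sub_zero]
    rw [this]
    exact Submodule.sum_mem _ fun i _ => Submodule.smul_mem _ _ (key i)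

lemma L_surj : LinearMap.range (L (M := M)) = ⊤ := by
  rw [LinearMap.range_eq_top]
  intro g
  refine ⟨∑ j : Cls M, g j • (Pi.single (rep j) 1 : FreeOp3 M), ?_⟩
  rw [map_sum]
  simp only [map_smul, L_single, cmp_rep]
  exact sum_single g

end NCMAux

/-- For a finite unitary magma `M` with `m` elements, the space of quadratic
relations `R_{NC M}` of the noncrossing clique operad `NC M` — the subspace of
the arity-3 component of the free operad on the `M`-triangles spanned by the
three displayed families of relations — has dimension `2m⁶ - 2m⁵ + m⁴`. -/
theorem dim_relations_noncrossing_operad (M : Type) [MulOneClass M] [Fintype M]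
    [DecidableEq M] (m : ℕ) (hm : Fintype.card M = m) :
    Module.finrank ℚ ↥(Submodule.span ℚ
      (({f : FreeOp3 M | ∃ p₀ p₁ p₂ q₀ q₁ q₂ r₀ r₁ : M,
          p₁ * q₀ = r₁ * r₀ ∧ p₁ * q₀ ≠ 1 ∧
          f = Pi.single (false, (p₀, p₁, p₂), (q₀, q₁, q₂)) 1
              - Pi.single (false, (p₀, r₁, p₂), (r₀, q₁, q₂)) 1} ∪
        {f : FreeOp3 M | ∃ p₀ p₁ p₂ q₀ q₁ q₂ r₀ r₂ : M,
          p₁ * q₀ = 1 ∧ r₂ * r₀ = 1 ∧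
          f = Pi.single (false, (p₀, p₁, p₂), (q₀, q₁, q₂)) 1
              - Pi.single (true, (p₀, q₁, r₂), (r₀, q₂, p₂)) 1}) ∪
        {f : FreeOp3 M | ∃ p₀ p₁ p₂ q₀ q₁ q₂ r₀ r₂ : M,
          p₂ * q₀ = r₂ * r₀ ∧ p₂ * q₀ ≠ 1 ∧
          f = Pi.single (true, (p₀, p₁, p₂), (q₀, q₁, q₂)) 1
              - Pi.single (true, (p₀, p₁, r₂), (r₀, q₁, q₂)) 1})) =
      2 * m ^ 6 - 2 * m ^ 5 + m ^ 4 := by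
  have hm1 : 1 ≤ m := hm ▸ Fintype.card_pos
  have hrw : (({f : FreeOp3 M | ∃ p₀ p₁ p₂ q₀ q₁ q₂ r₀ r₁ : M,
          p₁ * q₀ = r₁ * r₀ ∧ p₁ * q₀ ≠ 1 ∧
          f = Pi.single (false, (p₀, p₁, p₂), (q₀, q₁, q₂)) 1
              - Pi.single (false, (p₀, r₁, p₂), (r₀, q₁, q₂)) 1} ∪
        {f : FreeOp3 M | ∃ p₀ p₁ p₂ q₀ q₁ q₂ r₀ r₂ : M,
          p₁ * q₀ = 1 ∧ r₂ * r₀ = 1 ∧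
          f = Pi.single (false, (p₀, p₁, p₂), (q₀, q₁, q₂)) 1
              - Pi.single (true, (p₀, q₁, r₂), (r₀, q₂, p₂)) 1}) ∪
        {f : FreeOp3 M | ∃ p₀ p₁ p₂ q₀ q₁ q₂ r₀ r₂ : M,
          p₂ * q₀ = r₂ * r₀ ∧ p₂ * q₀ ≠ 1 ∧
          f = Pi.single (true, (p₀, p₁, p₂), (q₀, q₁, q₂)) 1
              - Pi.single (true, (p₀, p₁, r₂), (r₀, q₁, q₂)) 1}) = NCMAux.Rel M := rfl
  rw [hrw, NCMAux.span_rel]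
  have hrank := LinearMap.finrank_range_add_finrank_ker (NCMAux.L (M := M))
  rw [NCMAux.L_surj, finrank_top, Module.finrank_pi, Module.finrank_pi] at hrank
  have hcI : Fintype.card (NCMAux.Idx M) = 2 * m ^ 6 := by
    simp [Fintype.card_prod, hm]
    ring
  have hcJ : Fintype.card (NCMAux.Cls M) = m ^ 4 + 2 * (m ^ 4 * (m - 1)) := by
    have hsub : Fintype.card {v : M // v ≠ 1} = m - 1 := by
      rw [Fintype.card_subtype_compl, Fintype.card_subtype_eq, hm]
    simp [Fintype.card_sum, Fintype.card_prod, hm, hsub]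
    ring
  rw [hcI, hcJ] at hrank
  have h5 : 2 * m ^ 5 ≤ 2 * m ^ 6 :=
    Nat.mul_le_mul_left 2 (Nat.pow_le_pow_right hm1 (by norm_num))
  have h2 : (m ^ 4 + 2 * (m ^ 4 * (m - 1))) + (2 * m ^ 6 - 2 * m ^ 5 + m ^ 4)
      = 2 * m ^ 6 := by
    zify [h5, hm1]
    ring
  exact Nat.add_left_cancel (hrank.trans h2.symm)
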